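/- Let g ≥ 2 be an integer. For any integers k, k' ∈ ℤ, the distance d_g(⌊k/g⌋, ⌊k'/g⌋) is at most d_g(k, k'), where d_g is the word metric associated to S_g = {±g^n : n ∈ ℕ}. In other words, the map k ↦ ⌊k/g⌋ is 1-Lipschitz with respect to d_g. -/

import Mathlib

/-- The generating set `S_g = {± g^k : k ∈ ℕ}` in `ℤ`. -/
def Sg (g : ℤ) : Set ℤ := {x | ∃ n : ℕ, x = g ^ n ∨ x = -g ^ n}

/-- The word length of `k` with respect to `S_g`. -/
noncomputable def wlen (g : ℤ) (k : ℤ) : ℕ :=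
  sInf {m | ∃ l : List ℤ, (∀ x ∈ l, x ∈ Sg g) ∧ l.length = m ∧ l.sum = k}

/-- The word metric `d_g(m,n) = ℓ_g(m - n)`. -/
noncomputable def dg (g : ℤ) (m n : ℤ) : ℕ := wlen g (m - n)

lemma unit_list_mem (g k : ℤ) :
    ∀ x ∈ List.replicate k.natAbs (if 0 ≤ k then (1:ℤ) else -1), x ∈ Sg g := by
  intro x hx
  rw [List.mem_replicate] at hx
  refine ⟨0, ?_⟩
  rcases hx with ⟨-, rfl⟩
  split <;> simp

lemma unit_list_sum (g k : ℤ) :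
    (List.replicate k.natAbs (if 0 ≤ k then (1:ℤ) else -1)).sum = k := by
  simp only [List.sum_replicate, nsmul_eq_mul]
  split <;> omega

lemma wlen_nonempty (g k : ℤ) :
    {m | ∃ l : List ℤ, (∀ x ∈ l, x ∈ Sg g) ∧ l.length = m ∧ l.sum = k}.Nonempty :=
  ⟨k.natAbs, List.replicate k.natAbs (if 0 ≤ k then 1 else -1),
    unit_list_mem g k, by simp, unit_list_sum g k⟩

lemma decomp (g : ℤ) (l : List ℤ) (hl : ∀ x ∈ l, x ∈ Sg g) :
    ∃ (u : ℕ) (s : ℤ) (l₂ : List ℤ), (∀ x ∈ l₂, x ∈ Sg g) ∧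
      l₂.length + u = l.length ∧ l.sum = g * l₂.sum + s ∧ s.natAbs ≤ u := by
  induction l with
  | nil => exact ⟨0, 0, [], by simp, by simp, by simp, le_refl _⟩
  | cons x l ih =>
    obtain ⟨u, s, l₂, h1, h2, h3, h4⟩ := ih (fun y hy => hl y (List.mem_cons_of_mem _ hy))
    obtain ⟨n, hx⟩ := hl x (List.mem_cons_self (a := x) (l := l))
    cases n with
    | zero =>
      refine ⟨u + 1, s + x, l₂, h1, by simp [← h2]; omega, ?_, ?_⟩
      · simp only [List.sum_cons, h3]; ring
      · rcases hx with rfl | rfl <;> simp at * <;> omega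
    | succ j =>
      rcases hx with rfl | rfl
      · refine ⟨u, s, (g ^ j) :: l₂, ?_, by simpa using by omega, ?_, h4⟩
        · intro y hy
          rcases List.mem_cons.mp hy with rfl | hy
          · exact ⟨j, Or.inl rfl⟩
          · exact h1 y hy
        · simp only [List.sum_cons, h3]; ring
      · refine ⟨u, s, (-g ^ j) :: l₂, ?_, by simpa using by omega, ?_, h4⟩
        · intro y hy
          rcases List.mem_cons.mp hy with rfl | hy
          · exact ⟨j, Or.inr rfl⟩
          · exact h1 y hy
        · simp only [List.sum_cons, h3]; ring

theorem stmt_2 (g : ℤ) (hg : 2 ≤ g) (k k' : ℤ) :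
    dg g (Int.fdiv k g) (Int.fdiv k' g) ≤ dg g k k' := by
  have hg0 : (0:ℤ) < g := by omega
  unfold dg wlen
  obtain ⟨l, hl, hlen, hsum⟩ := Nat.sInf_mem (wlen_nonempty g (k - k'))
  obtain ⟨u, s, l₂, h1, h2, h3, h4⟩ := decomp g l hl
  set T := l₂.sum with hT
  -- rewrite fdiv as ediv
  rw [Int.fdiv_eq_ediv_of_nonneg _ (le_of_lt hg0), Int.fdiv_eq_ediv_of_nonneg _ (le_of_lt hg0)]
  -- k = k' + s + g * T
  have hk : k = (k' + s) + g * T := by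
    have := hsum; omega
  have hkd : k / g = (k' + s) / g + T := by
    rw [hk, Int.add_mul_ediv_left _ _ (ne_of_gt hg0)]
  set D' : ℤ := (k' + s) / g - k' / g with hD'
  have hgoal : k / g - k' / g = T + D' := by rw [hkd]; ring
  -- bounds on D'
  have hq1 : k' / g + s / g ≤ (k' + s) / g := by
    rw [Int.le_ediv_iff_mul_le hg0]
    have e1 := Int.ediv_mul_le k' (ne_of_gt hg0)
    have e2 := Int.ediv_mul_le s (ne_of_gt hg0)
    nlinarith [e1, e2]
  have hq2 : (k' + s) / g ≤ k' / g + s / g + 1 := by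
    have : (k' + s) / g < k' / g + s / g + 2 := by
      rw [Int.ediv_lt_iff_lt_mul hg0]
      have e1 := Int.mul_ediv_add_emod k' g
      have e2 := Int.mul_ediv_add_emod s g
      have m1 := Int.emod_lt_of_pos k' hg0
      have m2 := Int.emod_lt_of_pos s hg0
      nlinarith
    omega
  have habs : D'.natAbs ≤ u := by
    rcases Nat.eq_zero_or_pos u with hu | hu
    · -- u = 0 so s = 0, D' = 0
      have hs0 : s = 0 := by omega
      have : D' = 0 := by rw [hD', hs0, add_zero]; ring
      simp [this]
    · have hs1 : -(u:ℤ) ≤ s ∧ s ≤ u := by omega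
      have lb : -(u:ℤ) ≤ s / g := by
        rw [Int.le_ediv_iff_mul_le hg0]
        nlinarith [hs1.1]
      have ub : s / g < (u:ℤ) := by
        rw [Int.ediv_lt_iff_lt_mul hg0]
        nlinarith [hs1.2]
      have : -(u:ℤ) ≤ D' ∧ D' ≤ u := by constructor <;> omega
      omega
  -- construct the witness list
  apply le_trans (Nat.sInf_le (m := l₂.length + D'.natAbs) ?_)
  · omega
  · refine ⟨l₂ ++ List.replicate D'.natAbs (if 0 ≤ D' then 1 else -1), ?_, by simp, ?_⟩
    · intro x hx
      rcases List.mem_append.mp hx with hx | hx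
      · exact h1 x hx
      · exact unit_list_mem g D' x hx
    · rw [List.sum_append, unit_list_sum g D', hgoal, hT]
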